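/- Let M ∈ Mat(𝒜,p+q,p+q) be block lower triangular with blocks M = [[A, 0],[B, D]] where A is p×p, D is q×q and the top-right block is zero. Then sdet M = sdet M′ where M′ = [[A,0],[0,D]] is the corresponding block diagonal matrix; i.e., the symmetrized determinant does not depend on the block B. -/

import Mathlib

open Equiv Matrix BigOperators

noncomputable def sdet (F : Type*) [Field F] {A : Type*} [Ring A] [Algebra F A] {n : ℕ}
    (M : Matrix (Fin n) (Fin n) A) : A :=
  ((n.factorial : F)⁻¹) • ∑ σ : Equiv.Perm (Fin n), ∑ τ : Equiv.Perm (Fin n),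
    ((Equiv.Perm.sign σ : ℤ) * (Equiv.Perm.sign τ : ℤ)) •
      (List.ofFn fun i => M (σ i) (τ i)).prod

lemma card_isRight_filter {p q : ℕ} (ρ : Equiv.Perm (Fin (p+q))) :
    (Finset.univ.filter fun i => (finSumFinEquiv.symm (ρ i)).isRight = true).card = q := by
  rw [← Fintype.card_subtype]
  have e1 : {i // (finSumFinEquiv.symm (ρ i)).isRight = true} ≃
      {s : Fin p ⊕ Fin q // s.isRight = true} :=
    Equiv.subtypeEquiv (ρ.trans finSumFinEquiv.symm) (fun i => Iff.rfl)
  have e2 : {s : Fin p ⊕ Fin q // s.isRight = true} ≃ Fin q :=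
    { toFun := fun s => s.1.getRight s.2
      invFun := fun b => ⟨Sum.inr b, rfl⟩
      left_inv := by rintro ⟨(a|b), h⟩ <;> simp at h ⊢
      right_inv := fun b => rfl }
  rw [Fintype.card_congr (e1.trans e2), Fintype.card_fin]

theorem sdet_blockTriangular {F : Type*} [Field F] [CharZero F]
    {𝒜 : Type*} [Ring 𝒜] [Algebra F 𝒜] {p q : ℕ}
    (A : Matrix (Fin p) (Fin p) 𝒜) (B : Matrix (Fin q) (Fin p) 𝒜)
    (D : Matrix (Fin q) (Fin q) 𝒜) :
    sdet F ((Matrix.fromBlocks A 0 B D).submatrix finSumFinEquiv.symm finSumFinEquiv.symm) =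
      sdet F ((Matrix.fromBlocks A 0 0 D).submatrix finSumFinEquiv.symm finSumFinEquiv.symm) := by
  unfold sdet
  congr 1
  refine Finset.sum_congr rfl fun σ _ => Finset.sum_congr rfl fun τ _ => ?_
  congr 1
  by_cases h : ∃ i, (finSumFinEquiv.symm (σ i)).isLeft = true ∧
      (finSumFinEquiv.symm (τ i)).isRight = true
  · obtain ⟨i, h1, h2⟩ := h
    obtain ⟨a, ha⟩ := Sum.isLeft_iff.1 h1
    obtain ⟨b, hb⟩ := Sum.isRight_iff.1 h2
    rw [List.prod_eq_zero, List.prod_eq_zero] <;>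
      refine List.mem_ofFn.2 ⟨i, ?_⟩ <;>
      simp [Matrix.submatrix_apply, ha, hb]
  · push_neg at h
    have key : ∀ i, (finSumFinEquiv.symm (σ i)).isRight = (finSumFinEquiv.symm (τ i)).isRight := by
      have hsub : (Finset.univ.filter fun i => (finSumFinEquiv.symm (τ i)).isRight = true) ⊆
          (Finset.univ.filter fun i => (finSumFinEquiv.symm (σ i)).isRight = true) := by
        intro i hi
        simp only [Finset.mem_filter, Finset.mem_univ, true_and] at hi ⊢
        cases hs : finSumFinEquiv.symm (σ i) with
        | inl a => exact absurd hi (h i (by simp [hs]))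
        | inr b => simp [hs]
      have heq := Finset.eq_of_subset_of_card_le hsub
        (by rw [card_isRight_filter, card_isRight_filter])
      intro i
      have hiff := Finset.ext_iff.1 heq i
      simp only [Finset.mem_filter, Finset.mem_univ, true_and] at hiff
      cases hσr : (finSumFinEquiv.symm (σ i)).isRight <;>
        cases hτr : (finSumFinEquiv.symm (τ i)).isRight <;> simp_all
    refine congrArg List.prod (congrArg List.ofFn (funext fun i => ?_))
    have hk := key i
    rcases hσ : finSumFinEquiv.symm (σ i) with a | a <;>
      rcases hτ : finSumFinEquiv.symm (τ i) with b | b <;>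
      simp only [hσ, hτ] at hk ⊢ <;>
      simp_all [Matrix.submatrix_apply, hσ, hτ]
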